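/- Expectation of the similarity score (Proposition 1). Condition on the underlying permutation Π* being the identity. For every pair of users (i,j)∈[n]×[n] and every integer k≥3 with k≤min(n−1,m), the similarity score satisfies E[Φ_{ij}] = C(m,k)·(ρ_u σ_u²)^k·(ρ_a σ_a²)^k·C(n−1,k)·k!·1{i=j}; in particular E[Φ_{ij}]=0 whenever i≠j. -/

import Mathlib

open MeasureTheory ProbabilityTheory Filter Finset

/-- A pair of `{0,1}`-valued random variables whose joint law is the
correlated Bernoulli`(q, ρ)` law. -/
def IsCorrBern {Ω : Type*} [MeasurableSpace Ω] (P : Measure Ω)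
    (X Y : Ω → ℝ) (q ρ : ℝ) : Prop :=
  Measurable X ∧ Measurable Y ∧
  (∀ ω, X ω = 0 ∨ X ω = 1) ∧ (∀ ω, Y ω = 0 ∨ Y ω = 1) ∧
  P {ω | X ω = 1 ∧ Y ω = 1} = ENNReal.ofReal (q ^ 2 + ρ * q * (1 - q)) ∧
  P {ω | X ω = 1 ∧ Y ω = 0} = ENNReal.ofReal (q * (1 - q) * (1 - ρ)) ∧
  P {ω | X ω = 0 ∧ Y ω = 1} = ENNReal.ofReal (q * (1 - q) * (1 - ρ)) ∧
  P {ω | X ω = 0 ∧ Y ω = 0} = ENNReal.ofReal ((1 - q) ^ 2 + ρ * q * (1 - q))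

section CorrBern
variable {Ω : Type*} [MeasurableSpace Ω] {P : Measure Ω} {X Y : Ω → ℝ} {q ρ : ℝ}

lemma IsCorrBern.integral_phi [IsProbabilityMeasure P] (h : IsCorrBern P X Y q ρ)
    (φ : ℝ → ℝ → ℝ) :
    ∫ ω, φ (X ω) (Y ω) ∂P =
      (q ^ 2 + ρ * q * (1 - q)) * φ 1 1 + (q * (1 - q) * (1 - ρ)) * φ 1 0 +
        (q * (1 - q) * (1 - ρ)) * φ 0 1 + ((1 - q) ^ 2 + ρ * q * (1 - q)) * φ 0 0 := by
  obtain ⟨hX, hY, hX01, hY01, h11, h10, h01, h00⟩ := h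
  have m1 : ∀ (c : ℝ), MeasurableSet {ω | X ω = c} := fun c => hX (measurableSet_singleton c)
  have m2 : ∀ (c : ℝ), MeasurableSet {ω | Y ω = c} := fun c => hY (measurableSet_singleton c)
  have mS : ∀ (c d : ℝ), MeasurableSet {ω | X ω = c ∧ Y ω = d} := by
    intro c d
    have : {ω | X ω = c ∧ Y ω = d} = {ω | X ω = c} ∩ {ω | Y ω = d} := rfl
    rw [this]; exact (m1 c).inter (m2 d)
  have key : ∀ ψ : ℝ → ℝ → ℝ, ∫ ω, ψ (X ω) (Y ω) ∂P =
      (P {ω | X ω = 1 ∧ Y ω = 1}).toReal * ψ 1 1 +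
      (P {ω | X ω = 1 ∧ Y ω = 0}).toReal * ψ 1 0 +
      (P {ω | X ω = 0 ∧ Y ω = 1}).toReal * ψ 0 1 +
      (P {ω | X ω = 0 ∧ Y ω = 0}).toReal * ψ 0 0 := by
    intro ψ
    have hdecomp : (fun ω => ψ (X ω) (Y ω)) = fun ω =>
        ({ω | X ω = 1 ∧ Y ω = 1}.indicator (fun _ => ψ 1 1) ω +
          {ω | X ω = 1 ∧ Y ω = 0}.indicator (fun _ => ψ 1 0) ω) +
        ({ω | X ω = 0 ∧ Y ω = 1}.indicator (fun _ => ψ 0 1) ω +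
          {ω | X ω = 0 ∧ Y ω = 0}.indicator (fun _ => ψ 0 0) ω) := by
      funext ω
      rcases hX01 ω with hx | hx <;> rcases hY01 ω with hy | hy <;>
        simp [Set.indicator_apply, hx, hy]
    have hi : ∀ (c d : ℝ) (v : ℝ),
        Integrable ({ω | X ω = c ∧ Y ω = d}.indicator (fun _ => v)) P :=
      fun c d v => (integrable_const v).indicator (mS c d)
    have h1 : Integrable (fun ω => {ω | X ω = 1 ∧ Y ω = 1}.indicator (fun _ => ψ 1 1) ω +
        {ω | X ω = 1 ∧ Y ω = 0}.indicator (fun _ => ψ 1 0) ω) P := (hi 1 1 _).add (hi 1 0 _)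
    have h2 : Integrable (fun ω => {ω | X ω = 0 ∧ Y ω = 1}.indicator (fun _ => ψ 0 1) ω +
        {ω | X ω = 0 ∧ Y ω = 0}.indicator (fun _ => ψ 0 0) ω) P := (hi 0 1 _).add (hi 0 0 _)
    rw [hdecomp, integral_add h1 h2,
      integral_add (hi 1 1 _) (hi 1 0 _), integral_add (hi 0 1 _) (hi 0 0 _),
      integral_indicator_const _ (mS 1 1), integral_indicator_const _ (mS 1 0),
      integral_indicator_const _ (mS 0 1), integral_indicator_const _ (mS 0 0)]
    simp [smul_eq_mul, mul_comm, measureReal_def]; ring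
  set a : ℝ := q ^ 2 + ρ * q * (1 - q) with ha_def
  set b : ℝ := q * (1 - q) * (1 - ρ) with hb_def
  set d : ℝ := (1 - q) ^ 2 + ρ * q * (1 - q) with hd_def
  have ta : (P {ω | X ω = 1 ∧ Y ω = 1}).toReal = max a 0 := by
    rw [h11, ENNReal.toReal_ofReal']
  have tb : (P {ω | X ω = 1 ∧ Y ω = 0}).toReal = max b 0 := by
    rw [h10, ENNReal.toReal_ofReal']
  have tc : (P {ω | X ω = 0 ∧ Y ω = 1}).toReal = max b 0 := by
    rw [h01, ENNReal.toReal_ofReal']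
  have td : (P {ω | X ω = 0 ∧ Y ω = 0}).toReal = max d 0 := by
    rw [h00, ENNReal.toReal_ofReal']
  have hone : max a 0 + max b 0 + max b 0 + max d 0 = 1 := by
    have := key (fun _ _ => 1)
    simp only [integral_const, measure_univ, probReal_univ, ENNReal.toReal_one, one_smul, smul_eq_mul,
      mul_one] at this
    rw [ta, tb, tc, td] at this
    linarith
  have habd : a + b + b + d = 1 := by rw [ha_def, hb_def, hd_def]; ring
  have hma : max a 0 = a := by
    have := le_max_left a 0; have := le_max_left b 0; have := le_max_left d 0; linarith
  have hmb : max b 0 = b := by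
    have := le_max_left a 0; have := le_max_left b 0; have := le_max_left d 0; linarith
  have hmd : max d 0 = d := by
    have := le_max_left a 0; have := le_max_left b 0; have := le_max_left d 0; linarith
  rw [key φ, ta, tb, tc, td, hma, hmb, hmd]

end CorrBern

lemma integrable_of_bdd {Ω : Type*} [MeasurableSpace Ω] {P : Measure Ω}
    [IsProbabilityMeasure P] {f : Ω → ℝ} (hm : Measurable f) {C : ℝ}
    (h : ∀ ω, |f ω| ≤ C) : Integrable f P := by
  refine (integrable_const C).mono' hm.aestronglyMeasurable ?_
  filter_upwards with ω using (Real.norm_eq_abs _ ▸ h ω)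

lemma integral_indep_prod {Ω ι : Type*} [MeasurableSpace Ω] {P : Measure Ω}
    [IsProbabilityMeasure P] {F : ι → Ω → ℝ}
    (hind : iIndepFun F P)
    (hmeas : ∀ t, Measurable (F t)) (hbdd : ∀ t, ∃ C, ∀ ω, |F t ω| ≤ C)
    (s : Finset ι) :
    ∫ ω, ∏ t ∈ s, F t ω ∂P = ∏ t ∈ s, ∫ ω, F t ω ∂P := by
  classical
  have hint : ∀ t, Integrable (F t) P := by
    intro t; obtain ⟨C, hC⟩ := hbdd t; exact integrable_of_bdd (hmeas t) hC
  induction s using Finset.induction with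
  | empty => simp
  | @insert a s ha ih =>
    have hprodbd : ∃ C, ∀ ω, |∏ t ∈ s, F t ω| ≤ C := by
      choose C hC using hbdd
      refine ⟨∏ t ∈ s, |C t|, fun ω => ?_⟩
      rw [Finset.abs_prod]
      exact Finset.prod_le_prod (fun t _ => abs_nonneg _)
        (fun t _ => (hC t ω).trans (le_abs_self _))
    obtain ⟨C, hC⟩ := hprodbd
    have hprodmeas : Measurable (fun ω => ∏ t ∈ s, F t ω) :=
      Finset.measurable_prod _ (fun t _ => hmeas t)
    have hprodint : Integrable (fun ω => ∏ t ∈ s, F t ω) P :=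
      integrable_of_bdd hprodmeas hC
    have hIndep : IndepFun (∏ t ∈ s, F t) (F a) P :=
      hind.indepFun_finsetProd_of_notMem hmeas ha
    have hIndep' : IndepFun (fun ω => ∏ t ∈ s, F t ω) (F a) P := by
      have : (∏ t ∈ s, F t) = fun ω => ∏ t ∈ s, F t ω := by
        funext ω; rw [Finset.prod_apply]
      rwa [this] at hIndep
    have key := hIndep'.symm.integral_mul_eq_mul_integral (hint a).aestronglyMeasurable
      hprodint.aestronglyMeasurable
    have hfe : (F a * fun ω => ∏ t ∈ s, F t ω) = fun ω => F a ω * ∏ t ∈ s, F t ω := rfl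
    rw [hfe] at key
    simp only [Finset.prod_insert ha]
    rw [key, ih]

/-- The edge indicators of the pair of attributed graphs `(G₁, G₂')` on `n` user
vertices and `m` attribute vertices:  `Au`/`Aa` are the user–user/user–attribute
edge indicators of `G₁`, and `Bu`/`Ba` those of `G₂'`. -/
structure GraphPair (Ω : Type*) (n m : ℕ) where
  Au : Sym2 (Fin n) → Ω → ℝ
  Aa : Fin n × Fin m → Ω → ℝ
  Bu : Sym2 (Fin n) → Ω → ℝ
  Ba : Fin n × Fin m → Ω → ℝ

/-- The attributed Erdős–Rényi graph pair model `G(n,q_u,ρ_u;m,q_a,ρ_a)` with underlying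
permutation `π`: each user–user pair of indicators is a correlated Bernoulli`(q_u,ρ_u)`
pair, each user–attribute pair is a correlated Bernoulli`(q_a,ρ_a)` pair, and all these
pairs are mutually independent. -/
def GraphPair.IsAttrER {Ω : Type*} [MeasurableSpace Ω] {n m : ℕ}
    (G : GraphPair Ω n m) (P : Measure Ω) (π : Equiv.Perm (Fin n))
    (qu ρu qa ρa : ℝ) : Prop :=
  IsProbabilityMeasure P ∧
  (∀ e : Sym2 (Fin n), ¬ e.IsDiag → IsCorrBern P (G.Au e) (G.Bu (Sym2.map π e)) qu ρu) ∧
  (∀ p : Fin n × Fin m, IsCorrBern P (G.Aa p) (G.Ba (π p.1, p.2)) qa ρa) ∧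
  iIndepFun
    (Sum.elim
      (fun e : {e : Sym2 (Fin n) // ¬ e.IsDiag} =>
        fun ω => (G.Au e.1 ω, G.Bu (Sym2.map π e.1) ω))
      (fun p : Fin n × Fin m => fun ω => (G.Aa p ω, G.Ba (π p.1, p.2) ω))) P

/-- The set of attributes used by the tree encoded by `f` with root `i`:  a tree of the
family `G_{i,A}` is encoded by the function `f` sending each attribute `a ∈ A` to the
user (≠ `i`) on the length-2 path from `i` to `a`, with the convention `f a = i` off `A`. -/
def treeSupp {n m : ℕ} (i : Fin n) (f : Fin m → Fin n) : Finset (Fin m) :=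
  Finset.univ.filter (fun a => f a ≠ i)

/-- `f` encodes a tree of the family `G_{i,A}`. -/
def IsPort {n m : ℕ} (i : Fin n) (A : Finset (Fin m)) (f : Fin m → Fin n) : Prop :=
  treeSupp i f = A ∧ Set.InjOn f ↑(treeSupp i f)

/-- `f` encodes a tree of the family `G_{i,A}` for some set `A` of `k` attributes. -/
def IsATree {n m : ℕ} (i : Fin n) (k : ℕ) (f : Fin m → Fin n) : Prop :=
  (treeSupp i f).card = k ∧ Set.InjOn f ↑(treeSupp i f)

/-- The user–user edges of the tree with root `i` encoded by `f`. -/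
def userEdges {n m : ℕ} (i : Fin n) (f : Fin m → Fin n) : Finset (Sym2 (Fin n)) :=
  (treeSupp i f).image (fun a => s(i, f a))

/-- The user–attribute edges of the tree with root `i` encoded by `f`. -/
def attrEdges {n m : ℕ} (i : Fin n) (f : Fin m → Fin n) : Finset (Fin n × Fin m) :=
  (treeSupp i f).image (fun a => (f a, a))

/-- The port (non-root user) vertices of the tree with root `i` encoded by `f`. -/
def ports {n m : ℕ} (i : Fin n) (f : Fin m → Fin n) : Finset (Fin n) :=
  (treeSupp i f).image f

/-- The weight `ω(S)` of the tree `S` (root `i`, encoding `f`) in the graph with user–user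
edge indicators `Xu` and user–attribute edge indicators `Xa`. -/
noncomputable def wt {Ω : Type*} {n m : ℕ} (Xu : Sym2 (Fin n) → Ω → ℝ)
    (Xa : Fin n × Fin m → Ω → ℝ) (qu qa : ℝ) (i : Fin n) (f : Fin m → Fin n)
    (ω : Ω) : ℝ :=
  (∏ e ∈ userEdges i f, (Xu e ω - qu)) * (∏ p ∈ attrEdges i f, (Xa p ω - qa))

section Comb
variable {n m : ℕ} {i j : Fin n} {f g : Fin m → Fin n}

lemma mem_treeSupp {a : Fin m} : a ∈ treeSupp i f ↔ f a ≠ i := by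
  simp [treeSupp]

lemma userEdges_not_isDiag {x : Sym2 (Fin n)} (hx : x ∈ userEdges i f) : ¬ x.IsDiag := by
  simp only [userEdges, Finset.mem_image] at hx
  obtain ⟨a, ha, rfl⟩ := hx
  simp [Sym2.mk_isDiag_iff]
  exact fun h => (mem_treeSupp.mp ha) h.symm

lemma card_userEdges (h : Set.InjOn f ↑(treeSupp i f)) :
    (userEdges i f).card = (treeSupp i f).card := by
  refine Finset.card_image_of_injOn ?_
  intro a ha b hb hab
  rw [Sym2.eq_iff] at hab
  rcases hab with ⟨-, h2⟩ | ⟨-, h2⟩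
  · exact h ha hb h2
  · exact absurd h2 (mem_treeSupp.mp (Finset.mem_coe.mp ha))

lemma card_attrEdges : (attrEdges i f).card = (treeSupp i f).card := by
  refine Finset.card_image_of_injOn ?_
  intro a _ b _ hab
  exact (Prod.mk.injEq _ _ _ _ ▸ hab).2

lemma edges_match {A : Finset (Fin m)} (hA : 2 ≤ A.card)
    (hf : IsPort i A f) (hg : IsPort j A g)
    (hu : userEdges i f = userEdges j g) (ha : attrEdges i f = attrEdges j g) :
    i = j ∧ f = g := by
  obtain ⟨hfA, hfinj⟩ := hf
  obtain ⟨hgA, hginj⟩ := hg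
  have hfg : ∀ a ∈ A, f a = g a := by
    intro a haA
    have h1 : (f a, a) ∈ attrEdges i f :=
      Finset.mem_image_of_mem _ (hfA ▸ haA)
    rw [ha] at h1
    simp only [attrEdges, Finset.mem_image] at h1
    obtain ⟨b, _, hb⟩ := h1
    obtain ⟨hb1, hb2⟩ := Prod.mk.injEq _ _ _ _ ▸ hb
    exact (hb2 ▸ hb1).symm
  have hij : i = j := by
    by_contra hij
    have hkey : ∀ a ∈ A, f a = j := by
      intro a haA
      have h1 : s(i, f a) ∈ userEdges i f :=
        Finset.mem_image_of_mem _ (hfA ▸ haA)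
      rw [hu] at h1
      simp only [userEdges, Finset.mem_image] at h1
      obtain ⟨b, _, hb⟩ := h1
      rw [Sym2.eq_iff] at hb
      rcases hb with ⟨h1, -⟩ | ⟨h1, -⟩
      · exact absurd h1.symm hij
      · exact h1.symm
    obtain ⟨a, haA, b, hbA, hab⟩ := Finset.one_lt_card.mp hA
    exact hab (hfinj (by rw [hfA]; exact haA) (by rw [hfA]; exact hbA)
      (by rw [hkey a haA, hkey b hbA]))
  refine ⟨hij, funext fun a => ?_⟩
  by_cases haA : a ∈ A
  · exact hfg a haA
  · have h1 : f a = i := by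
      by_contra h; exact haA (hfA ▸ mem_treeSupp.mpr h)
    have h2 : g a = j := by
      by_contra h; exact haA (hgA ▸ mem_treeSupp.mpr h)
    rw [h1, h2, hij]

open scoped Classical in
lemma card_isPort (i : Fin n) (A : Finset (Fin m)) :
    (Finset.univ.filter fun f : Fin m → Fin n => IsPort i A f).card
      = (n - 1).descFactorial A.card := by
  classical
  rw [← Fintype.card_subtype]
  have e : {f : Fin m → Fin n // IsPort i A f} ≃ (↥A ↪ {x : Fin n // x ≠ i}) := by
    refine
      { toFun := fun f => ⟨fun a => ⟨f.1 a.1, ?_⟩, ?_⟩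
        invFun := fun e => ⟨fun a => if h : a ∈ A then (e ⟨a, h⟩).1 else i, ?_⟩
        left_inv := ?_
        right_inv := ?_ }
    · exact mem_treeSupp.mp ((Finset.ext_iff.mp f.2.1 _).mpr a.2)
    · intro a b hab
      have h1 : f.1 a.1 = f.1 b.1 := Subtype.ext_iff.mp hab
      exact Subtype.ext (f.2.2 (by rw [f.2.1]; exact Finset.mem_coe.mpr a.2)
        (by rw [f.2.1]; exact Finset.mem_coe.mpr b.2) h1)
    · have hsupp : treeSupp i (fun a => if h : a ∈ A then (e ⟨a, h⟩).1 else i) = A := by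
        ext a
        rw [mem_treeSupp]
        by_cases h : a ∈ A
        · simp only [dif_pos h, h, iff_true]
          exact (e ⟨a, h⟩).2
        · simp [dif_neg h, h]
      refine ⟨hsupp, ?_⟩
      rw [hsupp]
      intro a ha b hb hab
      have ha' : a ∈ A := Finset.mem_coe.mp ha
      have hb' : b ∈ A := Finset.mem_coe.mp hb
      simp only [dif_pos ha', dif_pos hb'] at hab
      have := e.injective (Subtype.ext hab)
      exact Subtype.ext_iff.mp this
    · intro f
      apply Subtype.ext
      funext a
      by_cases h : a ∈ A
      · simp only [dif_pos h]
        rfl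
      · simp only [dif_neg h]
        by_contra hne
        exact h (f.2.1 ▸ mem_treeSupp.mpr (fun hh => hne hh.symm))
    · intro e
      ext a
      simp [a.2]
  rw [Fintype.card_congr e, Fintype.card_embedding_eq, Fintype.card_coe]
  congr 1
  rw [Fintype.card_subtype_compl, Fintype.card_subtype_eq, Fintype.card_fin]

end Comb

lemma prod_subtype_ite {α : Type*} [Fintype α] [DecidableEq α] {p : α → Prop}
    [DecidablePred p] {s : Finset α} (hs : ∀ x ∈ s, p x) (v : α → ℝ) :
    (∏ e : {x // p x}, if e.1 ∈ s then v e.1 else 1) = ∏ x ∈ s, v x := by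
  rw [← Finset.prod_subtype (Finset.univ.filter p) (by simp)
    (fun x => if x ∈ s then v x else 1)]
  rw [Finset.prod_ite_mem, Finset.inter_eq_right.mpr (fun x hx => by simp [hs x hx])]


lemma abs01_sub_le {x c : ℝ} (h : x = 0 ∨ x = 1) : |x - c| ≤ 1 + |c| := by
  rcases h with rfl | rfl
  · rw [zero_sub, abs_neg]; linarith [abs_nonneg c]
  · rw [sub_eq_add_neg]
    refine (abs_add_le 1 (-c)).trans ?_
    simp

lemma abs_ite_le {c : Prop} [Decidable c] {x q : ℝ} (h : x = 0 ∨ x = 1) :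
    |if c then x - q else 1| ≤ 1 + |q| := by
  split_ifs
  · exact abs01_sub_le h
  · rw [abs_one]; linarith [abs_nonneg q]

noncomputable def Ffun {Ω : Type*} {n m : ℕ} (G : GraphPair Ω n m) (qu qa : ℝ)
    (Ef Eg : Finset (Sym2 (Fin n))) (Pf Pg : Finset (Fin n × Fin m)) :
    ({e : Sym2 (Fin n) // ¬ e.IsDiag} ⊕ Fin n × Fin m) → Ω → ℝ :=
  Sum.elim
    (fun e ω => (if e.1 ∈ Ef then G.Au e.1 ω - qu else 1) *
      (if e.1 ∈ Eg then G.Bu e.1 ω - qu else 1))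
    (fun p ω => (if p ∈ Pf then G.Aa p ω - qa else 1) *
      (if p ∈ Pg then G.Ba p ω - qa else 1))

lemma wt_mul_spec {Ω : Type*} [MeasurableSpace Ω] {n m : ℕ}
    (G : GraphPair Ω n m) (P : Measure Ω) (qu ρu qa ρa : ℝ)
    (hmodel : G.IsAttrER P (Equiv.refl (Fin n)) qu ρu qa ρa)
    (i j : Fin n) (f g : Fin m → Fin n) :
    Integrable (fun ω => wt G.Au G.Aa qu qa i f ω * wt G.Bu G.Ba qu qa j g ω) P ∧
    ∫ ω, wt G.Au G.Aa qu qa i f ω * wt G.Bu G.Ba qu qa j g ω ∂P =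
      (if userEdges i f = userEdges j g ∧ attrEdges i f = attrEdges j g then
        (ρu * (qu * (1 - qu))) ^ (userEdges i f).card *
          (ρa * (qa * (1 - qa))) ^ (attrEdges i f).card
      else 0) := by
  classical
  obtain ⟨hP, hcu, hca, hind⟩ := hmodel
  haveI := hP
  simp only [Equiv.coe_refl, Sym2.map_id, Sym2.map_id', id_eq, Equiv.refl_apply] at hcu hca hind
  set Ef := userEdges i f with hEf
  set Eg := userEdges j g with hEg
  set Pf := attrEdges i f with hPf
  set Pg := attrEdges j g with hPg
  set F := Ffun G qu qa Ef Eg Pf Pg with hF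
  -- measurability of the basic variables
  have mAu : ∀ e : Sym2 (Fin n), ¬ e.IsDiag → Measurable (G.Au e) := fun e he => (hcu e he).1
  have mBu : ∀ e : Sym2 (Fin n), ¬ e.IsDiag → Measurable (G.Bu e) := fun e he => (hcu e he).2.1
  have mAa : ∀ p, Measurable (G.Aa p) := fun p => (hca p).1
  have mBa : ∀ p, Measurable (G.Ba p) := fun p => (hca p).2.1
  have vAu : ∀ (e : Sym2 (Fin n)) (he : ¬ e.IsDiag) ω, G.Au e ω = 0 ∨ G.Au e ω = 1 :=
    fun e he => (hcu e he).2.2.1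
  have vBu : ∀ (e : Sym2 (Fin n)) (he : ¬ e.IsDiag) ω, G.Bu e ω = 0 ∨ G.Bu e ω = 1 :=
    fun e he => (hcu e he).2.2.2.1
  have vAa : ∀ p ω, G.Aa p ω = 0 ∨ G.Aa p ω = 1 := fun p => (hca p).2.2.1
  have vBa : ∀ p ω, G.Ba p ω = 0 ∨ G.Ba p ω = 1 := fun p => (hca p).2.2.2.1
  -- measurability of F
  have hmeasF : ∀ t, Measurable (F t) := by
    rintro (e | p)
    · refine Measurable.mul ?_ ?_ <;> split_ifs
      · exact (mAu e.1 e.2).sub measurable_const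
      · exact measurable_const
      · exact (mBu e.1 e.2).sub measurable_const
      · exact measurable_const
    · refine Measurable.mul ?_ ?_ <;> split_ifs
      · exact (mAa p).sub measurable_const
      · exact measurable_const
      · exact (mBa p).sub measurable_const
      · exact measurable_const
  -- boundedness of F
  have hbddF : ∀ t, ∃ C, ∀ ω, |F t ω| ≤ C := by
    rintro (e | p)
    · refine ⟨(1 + |qu|) * (1 + |qu|), fun ω => ?_⟩
      rw [show F (Sum.inl e) ω = (if e.1 ∈ Ef then G.Au e.1 ω - qu else 1) *
        (if e.1 ∈ Eg then G.Bu e.1 ω - qu else 1) from rfl, abs_mul]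
      exact mul_le_mul (abs_ite_le (vAu e.1 e.2 ω)) (abs_ite_le (vBu e.1 e.2 ω))
        (abs_nonneg _) (by positivity)
    · refine ⟨(1 + |qa|) * (1 + |qa|), fun ω => ?_⟩
      rw [show F (Sum.inr p) ω = (if p ∈ Pf then G.Aa p ω - qa else 1) *
        (if p ∈ Pg then G.Ba p ω - qa else 1) from rfl, abs_mul]
      exact mul_le_mul (abs_ite_le (vAa p ω)) (abs_ite_le (vBa p ω))
        (abs_nonneg _) (by positivity)
  -- independence of F
  have hindF : iIndepFun F P := by
    have hφ : ∀ t : {e : Sym2 (Fin n) // ¬ e.IsDiag} ⊕ Fin n × Fin m,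
        Measurable (Sum.elim
          (fun (e : {e : Sym2 (Fin n) // ¬ e.IsDiag}) (xy : ℝ × ℝ) =>
            (if e.1 ∈ Ef then xy.1 - qu else 1) * (if e.1 ∈ Eg then xy.2 - qu else 1))
          (fun (p : Fin n × Fin m) (xy : ℝ × ℝ) =>
            (if p ∈ Pf then xy.1 - qa else 1) * (if p ∈ Pg then xy.2 - qa else 1)) t) := by
      rintro (e | p)
      · refine Measurable.mul ?_ ?_ <;> split_ifs
        · exact measurable_fst.sub measurable_const
        · exact measurable_const
        · exact measurable_snd.sub measurable_const
        · exact measurable_const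
      · refine Measurable.mul ?_ ?_ <;> split_ifs
        · exact measurable_fst.sub measurable_const
        · exact measurable_const
        · exact measurable_snd.sub measurable_const
        · exact measurable_const
    have := hind.comp _ hφ
    have heq : (fun t => Sum.elim
          (fun (e : {e : Sym2 (Fin n) // ¬ e.IsDiag}) (xy : ℝ × ℝ) =>
            (if e.1 ∈ Ef then xy.1 - qu else 1) * (if e.1 ∈ Eg then xy.2 - qu else 1))
          (fun (p : Fin n × Fin m) (xy : ℝ × ℝ) =>
            (if p ∈ Pf then xy.1 - qa else 1) * (if p ∈ Pg then xy.2 - qa else 1)) t ∘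
        Sum.elim
          (fun e : {e : Sym2 (Fin n) // ¬ e.IsDiag} => fun ω => (G.Au e.1 ω, G.Bu e.1 ω))
          (fun p : Fin n × Fin m => fun ω => (G.Aa p ω, G.Ba (p.1, p.2) ω)) t) = F := by
      funext t
      cases t <;> rfl
    rwa [heq] at this
  -- pointwise product formula
  have hL : ∀ ω, wt G.Au G.Aa qu qa i f ω * wt G.Bu G.Ba qu qa j g ω = ∏ t, F t ω := by
    intro ω
    rw [Fintype.prod_sum_type]
    have e1 : (∏ e : {e : Sym2 (Fin n) // ¬ e.IsDiag}, F (Sum.inl e) ω) =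
        (∏ x ∈ Ef, (G.Au x ω - qu)) * ∏ x ∈ Eg, (G.Bu x ω - qu) := by
      rw [show (fun e : {e : Sym2 (Fin n) // ¬ e.IsDiag} => F (Sum.inl e) ω) =
        (fun e => (if e.1 ∈ Ef then G.Au e.1 ω - qu else 1) *
          (if e.1 ∈ Eg then G.Bu e.1 ω - qu else 1)) from rfl, Finset.prod_mul_distrib,
        prod_subtype_ite (fun x hx => userEdges_not_isDiag (hEf ▸ hx)) (fun x => G.Au x ω - qu),
        prod_subtype_ite (fun x hx => userEdges_not_isDiag (hEg ▸ hx)) (fun x => G.Bu x ω - qu)]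
    have e2 : (∏ p : Fin n × Fin m, F (Sum.inr p) ω) =
        (∏ p ∈ Pf, (G.Aa p ω - qa)) * ∏ p ∈ Pg, (G.Ba p ω - qa) := by
      rw [show (fun p : Fin n × Fin m => F (Sum.inr p) ω) =
        (fun p => (if p ∈ Pf then G.Aa p ω - qa else 1) *
          (if p ∈ Pg then G.Ba p ω - qa else 1)) from rfl, Finset.prod_mul_distrib,
        Fintype.prod_ite_mem Pf (fun p => G.Aa p ω - qa),
        Fintype.prod_ite_mem Pg (fun p => G.Ba p ω - qa)]
    rw [e1, e2, wt, wt]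
    ring
  constructor
  · have hm : Measurable (fun ω => ∏ t, F t ω) := Finset.measurable_prod _ fun t _ => hmeasF t
    choose C hC using hbddF
    have : Integrable (fun ω => ∏ t, F t ω) P := by
      refine integrable_of_bdd hm (C := ∏ t, |C t|) fun ω => ?_
      rw [Finset.abs_prod]
      exact Finset.prod_le_prod (fun t _ => abs_nonneg _)
        (fun t _ => (hC t ω).trans (le_abs_self _))
    exact this.congr (by filter_upwards with ω using (hL ω).symm)
  -- the integral
  have hInt : ∫ ω, wt G.Au G.Aa qu qa i f ω * wt G.Bu G.Ba qu qa j g ω ∂P =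
      ∏ t, ∫ ω, F t ω ∂P := by
    rw [show (fun ω => wt G.Au G.Aa qu qa i f ω * wt G.Bu G.Ba qu qa j g ω) =
      (fun ω => ∏ t, F t ω) from funext hL]
    exact integral_indep_prod hindF hmeasF hbddF _
  rw [hInt]
  -- value of each factor
  have hup : ∀ e : {e : Sym2 (Fin n) // ¬ e.IsDiag}, (∫ ω, F (Sum.inl e) ω ∂P) =
      (if e.1 ∈ Ef then (if e.1 ∈ Eg then ρu * (qu * (1 - qu)) else 0)
        else (if e.1 ∈ Eg then 0 else 1)) := by
    intro e
    have hb := hcu e.1 e.2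
    have hv := hb.integral_phi (fun x y =>
      (if e.1 ∈ Ef then x - qu else 1) * (if e.1 ∈ Eg then y - qu else 1))
    refine hv.trans ?_
    split_ifs <;> ring
  have hap : ∀ p : Fin n × Fin m, (∫ ω, F (Sum.inr p) ω ∂P) =
      (if p ∈ Pf then (if p ∈ Pg then ρa * (qa * (1 - qa)) else 0)
        else (if p ∈ Pg then 0 else 1)) := by
    intro p
    have hb := hca p
    have hv := hb.integral_phi (fun x y =>
      (if p ∈ Pf then x - qa else 1) * (if p ∈ Pg then y - qa else 1))
    refine hv.trans ?_
    split_ifs <;> ring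
  by_cases hmatch : Ef = Eg ∧ Pf = Pg
  · rw [if_pos hmatch]
    obtain ⟨h1, h2⟩ := hmatch
    rw [Fintype.prod_sum_type]
    have hite : ∀ (c : Prop) [Decidable c] (x : ℝ),
        (if c then (if c then x else 0) else (if c then 0 else 1)) = if c then x else 1 := by
      intro c _ x; split_ifs <;> rfl
    have p1 : (∏ e : {e : Sym2 (Fin n) // ¬ e.IsDiag}, ∫ ω, F (Sum.inl e) ω ∂P) =
        (ρu * (qu * (1 - qu))) ^ Ef.card := by
      have hval : ∀ e : {e : Sym2 (Fin n) // ¬ e.IsDiag}, (∫ ω, F (Sum.inl e) ω ∂P) =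
          (if e.1 ∈ Ef then ρu * (qu * (1 - qu)) else 1) := by
        intro e
        rw [hup e, ← h1, hite]
      rw [Finset.prod_congr rfl (fun e _ => hval e),
        prod_subtype_ite (fun x hx => userEdges_not_isDiag (hEf ▸ hx))
          (fun _ => ρu * (qu * (1 - qu))), Finset.prod_const]
    have p2 : (∏ p : Fin n × Fin m, ∫ ω, F (Sum.inr p) ω ∂P) =
        (ρa * (qa * (1 - qa))) ^ Pf.card := by
      have hval : ∀ p : Fin n × Fin m, (∫ ω, F (Sum.inr p) ω ∂P) =
          (if p ∈ Pf then ρa * (qa * (1 - qa)) else 1) := by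
        intro p
        rw [hap p, ← h2, hite]
      rw [Finset.prod_congr rfl (fun p _ => hval p),
        Fintype.prod_ite_mem Pf (fun _ => ρa * (qa * (1 - qa))), Finset.prod_const]
    rw [p1, p2]
  · rw [if_neg hmatch]
    rw [not_and_or] at hmatch
    rcases hmatch with hne | hne
    · have : ∃ x, ¬ (x ∈ Ef ↔ x ∈ Eg) := by
        by_contra hno
        push_neg at hno
        exact hne (Finset.ext fun x => (hno x))
      obtain ⟨x, hx⟩ := this
      rw [iff_iff_implies_and_implies, not_and_or] at hx
      have hdiag : ¬ x.IsDiag := by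
        rcases hx with hx | hx
        · push_neg at hx
          exact userEdges_not_isDiag (hEf ▸ hx.1)
        · push_neg at hx
          exact userEdges_not_isDiag (hEg ▸ hx.1)
      refine Finset.prod_eq_zero (Finset.mem_univ (Sum.inl ⟨x, hdiag⟩)) ?_
      rw [hup ⟨x, hdiag⟩]
      rcases hx with hx | hx <;> push_neg at hx
      · rw [if_pos hx.1, if_neg hx.2]
      · rw [if_neg hx.2, if_pos hx.1]
    · have : ∃ p, ¬ (p ∈ Pf ↔ p ∈ Pg) := by
        by_contra hno
        push_neg at hno
        exact hne (Finset.ext fun p => (hno p))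
      obtain ⟨p, hp⟩ := this
      rw [iff_iff_implies_and_implies, not_and_or] at hp
      refine Finset.prod_eq_zero (Finset.mem_univ (Sum.inr p)) ?_
      rw [hap p]
      rcases hp with hp | hp <;> push_neg at hp
      · rw [if_pos hp.1, if_neg hp.2]
      · rw [if_neg hp.2, if_pos hp.1]

open scoped Classical in
/-- The weighted count `W_{i,A}` of the family `G_{i,A}`. -/
noncomputable def Wsum {Ω : Type*} {n m : ℕ} (Xu : Sym2 (Fin n) → Ω → ℝ)
    (Xa : Fin n × Fin m → Ω → ℝ) (qu qa : ℝ) (i : Fin n) (A : Finset (Fin m))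
    (ω : Ω) : ℝ :=
  ∑ f : Fin m → Fin n, if IsPort i A f then wt Xu Xa qu qa i f ω else 0

/-- The similarity score `Φ_{ij}`. -/
noncomputable def Phi {Ω : Type*} {n m : ℕ} (G : GraphPair Ω n m)
    (qu qa : ℝ) (k : ℕ) (i j : Fin n) (ω : Ω) : ℝ :=
  ∑ A ∈ Finset.powersetCard k (Finset.univ : Finset (Fin m)),
    Wsum G.Au G.Aa qu qa i A ω * Wsum G.Bu G.Ba qu qa j A ω

/-- **Expectation of the similarity score (Proposition 1).** Conditionally on the
underlying permutation `Π*` being the identity, for every pair of users `(i,j)` and every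
`3 ≤ k ≤ min(n-1, m)`,
`E[Φ_{ij}] = C(m,k)·(ρ_u σ_u²)^k·(ρ_a σ_a²)^k·C(n-1,k)·k!·1{i=j}`. -/
theorem expectation_similarity_score {Ω : Type*} [MeasurableSpace Ω] {n m : ℕ}
    (G : GraphPair Ω n m) (P : Measure Ω) (qu ρu qa ρa : ℝ)
    (hmodel : G.IsAttrER P (Equiv.refl (Fin n)) qu ρu qa ρa)
    (k : ℕ) (hk : 3 ≤ k) (hkn : k ≤ n - 1) (hkm : k ≤ m) (i j : Fin n) :
    (∫ ω, Phi G qu qa k i j ω ∂P) =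
      (Nat.choose m k : ℝ) * (ρu * (qu * (1 - qu))) ^ k * (ρa * (qa * (1 - qa))) ^ k *
        (Nat.choose (n - 1) k : ℝ) * (Nat.factorial k : ℝ) *
        (if i = j then 1 else 0) := by
  classical
  haveI := hmodel.1
  set T : (Fin m → Fin n) → (Fin m → Fin n) → Ω → ℝ := fun f g ω =>
    wt G.Au G.Aa qu qa i f ω * wt G.Bu G.Ba qu qa j g ω with hT
  set D : ℝ := (ρu * (qu * (1 - qu))) ^ k * (ρa * (qa * (1 - qa))) ^ k with hD
  have hTspec : ∀ f g, Integrable (T f g) P ∧ ∫ ω, T f g ω ∂P =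
      (if userEdges i f = userEdges j g ∧ attrEdges i f = attrEdges j g then
        (ρu * (qu * (1 - qu))) ^ (userEdges i f).card *
          (ρa * (qa * (1 - qa))) ^ (attrEdges i f).card
      else 0) := fun f g => wt_mul_spec G P qu ρu qa ρa hmodel i j f g
  have hPhi : ∀ ω, Phi G qu qa k i j ω =
      ∑ A ∈ Finset.powersetCard k (Finset.univ : Finset (Fin m)),
        ∑ f : Fin m → Fin n, ∑ g : Fin m → Fin n,
          (if IsPort i A f ∧ IsPort j A g then T f g ω else 0) := by
    intro ω
    unfold Phi Wsum
    refine Finset.sum_congr rfl fun A _ => ?_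
    rw [Finset.sum_mul_sum]
    refine Finset.sum_congr rfl fun f _ => Finset.sum_congr rfl fun g _ => ?_
    rw [ite_zero_mul_ite_zero]
  have hIte : ∀ (c : Prop) (inst : Decidable c) (f g : Fin m → Fin n),
      Integrable (fun ω => if c then T f g ω else 0) P := by
    intro c inst f g
    by_cases hc : c
    · simp only [if_pos hc]; exact (hTspec f g).1
    · simp only [if_neg hc]; exact integrable_zero _ _ _
  have step1 : (∫ ω, Phi G qu qa k i j ω ∂P) =
      ∑ A ∈ Finset.powersetCard k (Finset.univ : Finset (Fin m)),
        ∑ f : Fin m → Fin n, ∑ g : Fin m → Fin n,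
          (if IsPort i A f ∧ IsPort j A g then ∫ ω, T f g ω ∂P else 0) := by
    rw [integral_congr_ae (Filter.Eventually.of_forall hPhi),
      integral_finset_sum _ (fun A _ => integrable_finset_sum _ (fun f _ =>
        integrable_finset_sum _ (fun g _ => hIte _ _ f g)))]
    refine Finset.sum_congr rfl fun A _ => ?_
    rw [integral_finset_sum _ (fun f _ => integrable_finset_sum _ (fun g _ => hIte _ _ f g))]
    refine Finset.sum_congr rfl fun f _ => ?_
    rw [integral_finset_sum _ (fun g _ => hIte _ _ f g)]
    refine Finset.sum_congr rfl fun g _ => ?_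
    by_cases hc : IsPort i A f ∧ IsPort j A g
    · simp only [if_pos hc]
    · simp only [if_neg hc, integral_zero]
  have hval : ∀ A ∈ Finset.powersetCard k (Finset.univ : Finset (Fin m)),
      ∀ f g : Fin m → Fin n, IsPort i A f → IsPort j A g →
      (∫ ω, T f g ω ∂P) = if i = j ∧ f = g then D else 0 := by
    intro A hA f g hf hg
    have hAcard : A.card = k := (Finset.mem_powersetCard.mp hA).2
    rw [(hTspec f g).2]
    by_cases hm2 : userEdges i f = userEdges j g ∧ attrEdges i f = attrEdges j g
    · obtain ⟨hij, hfg⟩ := edges_match (by omega : 2 ≤ A.card) hf hg hm2.1 hm2.2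
      rw [if_pos hm2, if_pos ⟨hij, hfg⟩, card_userEdges hf.2, card_attrEdges, hf.1, hAcard, hD]
    · rw [if_neg hm2, if_neg ?_]
      rintro ⟨rfl, rfl⟩
      exact hm2 ⟨rfl, rfl⟩
  rw [step1]
  rw [Finset.sum_congr rfl (fun A hA => Finset.sum_congr rfl fun f _ =>
    Finset.sum_congr rfl fun g _ => (by
      by_cases hc : IsPort i A f ∧ IsPort j A g
      · simp only [if_pos hc]
        exact hval A hA f g hc.1 hc.2
      · simp only [if_neg hc] :
        (if IsPort i A f ∧ IsPort j A g then ∫ ω, T f g ω ∂P else 0) =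
          (if IsPort i A f ∧ IsPort j A g then (if i = j ∧ f = g then D else 0) else 0)))]
  by_cases hij : i = j
  · subst hij
    have hinner : ∀ A ∈ Finset.powersetCard k (Finset.univ : Finset (Fin m)),
        (∑ f : Fin m → Fin n, ∑ g : Fin m → Fin n,
          (if IsPort i A f ∧ IsPort i A g then (if i = i ∧ f = g then D else 0) else 0)) =
        ((n - 1).descFactorial k : ℝ) * D := by
      intro A hA
      have hAcard : A.card = k := (Finset.mem_powersetCard.mp hA).2
      have hsg : ∀ f : Fin m → Fin n, (∑ g : Fin m → Fin n,
          (if IsPort i A f ∧ IsPort i A g then (if i = i ∧ f = g then D else 0) else 0)) =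
          (if IsPort i A f then D else 0) := by
        intro f
        rw [Finset.sum_eq_single f]
        · by_cases hPf : IsPort i A f <;> simp [hPf]
        · intro b _ hb
          have : ¬(f = b) := fun h => hb h.symm
          simp [this]
        · intro h
          exact absurd (Finset.mem_univ f) h
      rw [Finset.sum_congr rfl (fun f _ => hsg f), ← Finset.sum_filter, Finset.sum_const,
        card_isPort, hAcard, nsmul_eq_mul]
    rw [Finset.sum_congr rfl hinner, Finset.sum_const, Finset.card_powersetCard,
      Finset.card_univ, Fintype.card_fin, nsmul_eq_mul, if_pos rfl, hD]
    push_cast [Nat.descFactorial_eq_factorial_mul_choose]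
    ring
  · rw [if_neg hij]
    rw [Finset.sum_eq_zero, mul_zero]
    intro A _
    rw [Finset.sum_eq_zero]
    intro f _
    rw [Finset.sum_eq_zero]
    intro g _
    split_ifs with h1 h2
    · exact absurd h2.1 hij
    · rfl
    · rfl
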